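/- Let G be a connected finite simple graph, U ⊆ V(G), and F a finite simple graph. Let ρ : G_U → G be the projection (v,S) ↦ v, and for ψ ∈ Hom(F,G) let hom_ψ(F,G_U) be the number of homomorphisms φ from F to G_U with ρ ∘ φ = ψ. Then hom_ψ(F,G_∅) > 0 for every ψ, and hom(F,G_U) ≤ hom(F,G_∅). -/

import Mathlib

open SimpleGraph

variable {V : Type}

/-- Vertices of the parity construction `G_U`: pairs `(v, S)` with `S` a set of edges
incident to `v` whose cardinality has the parity of `|{v} ∩ U|`. -/
def ParityVert (G : SimpleGraph V) (U : Set V) : Type :=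
  {p : V × Set (Sym2 V) //
    p.2 ⊆ G.incidenceSet p.1 ∧ p.2.ncard % 2 = ({p.1} ∩ U : Set V).ncard % 2}

/-- The parity construction `G_U`: `(v,S)` is adjacent to `(u,T)` iff `uv ∈ E(G)` and
`uv ∉ S △ T`. -/
def parityGraph (G : SimpleGraph V) (U : Set V) : SimpleGraph (ParityVert G U) where
  Adj x y := G.Adj x.1.1 y.1.1 ∧ s(x.1.1, y.1.1) ∉ symmDiff x.1.2 y.1.2
  symm := by
    constructor
    rintro x y ⟨h1, h2⟩
    exact ⟨h1.symm, by rw [Sym2.eq_swap, symmDiff_comm]; exact h2⟩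
  loopless := ⟨fun x h => G.loopless.irrefl _ h.1⟩

instance parityVert_finite [Finite V] (G : SimpleGraph V) (U : Set V) :
    Finite (ParityVert G U) := by
  unfold ParityVert; exact Subtype.finite

instance parityHom_finite [Finite V] {α : Type} [Finite α] (G : SimpleGraph V) (U : Set V)
    (F : SimpleGraph α) : Finite (F →g parityGraph G U) :=
  Finite.of_injective (fun f => (f : α → ParityVert G U)) DFunLike.coe_injective

lemma not_mem_symmDiff_iff' {X : Type} (s t : Set X) (x : X) :
    x ∉ symmDiff s t ↔ (x ∈ s ↔ x ∈ t) := by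
  simp [Set.mem_symmDiff]; tauto

lemma ncard_symmDiff_parity {X : Type} [Finite X] (s t : Set X) :
    (symmDiff s t).ncard % 2 = (s.ncard + t.ncard) % 2 := by
  have h1 : (s ∪ t).ncard + (s ∩ t).ncard = s.ncard + t.ncard :=
    Set.ncard_union_add_ncard_inter s t
  have h2 : s ∪ t = symmDiff s t ∪ (s ∩ t) := by
    ext x; simp [Set.mem_symmDiff]; tauto
  have h3 : Disjoint (symmDiff s t) (s ∩ t) := by
    rw [Set.disjoint_left]
    intro x hx hx'
    rcases Set.mem_symmDiff.1 hx with ⟨_, h⟩ | ⟨_, h⟩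
    · exact h hx'.2
    · exact h hx'.1
  have h4 : (symmDiff s t ∪ (s ∩ t)).ncard = (symmDiff s t).ncard + (s ∩ t).ncard :=
    Set.ncard_union_eq h3
  rw [h2] at h1
  omega

/-- "Dividing" a homomorphism into `G_U` by another one with the same projection
yields a homomorphism into `G_∅`. -/
def subLift [Fintype V] {α : Type} (G : SimpleGraph V) (U : Set V) (F : SimpleGraph α)
    (φ φ₀ : F →g parityGraph G U) (h : ∀ a, (φ₀ a).1.1 = (φ a).1.1) :
    F →g parityGraph G (∅ : Set V) where
  toFun a := ⟨((φ a).1.1, symmDiff (φ a).1.2 (φ₀ a).1.2), by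
    constructor
    · intro e he
      rcases Set.mem_symmDiff.1 he with ⟨h1, _⟩ | ⟨h1, _⟩
      · exact (φ a).2.1 h1
      · exact h a ▸ (φ₀ a).2.1 h1
    · have p1 := (φ a).2.2
      have p2 := (φ₀ a).2.2
      rw [h a] at p2
      have hkey := ncard_symmDiff_parity (φ a).1.2 (φ₀ a).1.2
      simp only [Set.inter_empty, Set.ncard_empty]
      omega⟩
  map_rel' := by
    intro a b hab
    obtain ⟨hGadj, hmem⟩ : G.Adj (φ a).1.1 (φ b).1.1 ∧
        s((φ a).1.1, (φ b).1.1) ∉ symmDiff (φ a).1.2 (φ b).1.2 := φ.map_rel' hab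
    obtain ⟨_, hmem0⟩ : G.Adj (φ₀ a).1.1 (φ₀ b).1.1 ∧
        s((φ₀ a).1.1, (φ₀ b).1.1) ∉ symmDiff (φ₀ a).1.2 (φ₀ b).1.2 := φ₀.map_rel' hab
    have hmem' : s(((φ a).1.1 : V), (φ b).1.1) ∉ symmDiff (φ a).1.2 (φ b).1.2 := hmem
    have hmem0' : s(((φ₀ a).1.1 : V), (φ₀ b).1.1) ∉ symmDiff (φ₀ a).1.2 (φ₀ b).1.2 := hmem0
    rw [h a, h b] at hmem0'
    refine ⟨hGadj, ?_⟩
    show s(((φ a).1.1 : V), (φ b).1.1) ∉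
      symmDiff (symmDiff (φ a).1.2 (φ₀ a).1.2) (symmDiff (φ b).1.2 (φ₀ b).1.2)
    rw [not_mem_symmDiff_iff'] at hmem' hmem0' ⊢
    rw [Set.mem_symmDiff, Set.mem_symmDiff]
    tauto

/-- Choice of a lift with prescribed projection, depending only on the projection. -/
noncomputable def pickLift [Fintype V] {α : Type} (G : SimpleGraph V) (U : Set V)
    (F : SimpleGraph α) (f : α → V)
    (h : Nonempty {φ₀ : F →g parityGraph G U // ∀ a, (φ₀ a).1.1 = f a}) :
    {φ₀ : F →g parityGraph G U // ∀ a, (φ₀ a).1.1 = f a} := Classical.choice h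

lemma pickLift_congr [Fintype V] {α : Type} (G : SimpleGraph V) (U : Set V)
    (F : SimpleGraph α) (f f' : α → V) (hff : f = f')
    (h : Nonempty {φ₀ : F →g parityGraph G U // ∀ a, (φ₀ a).1.1 = f a})
    (h' : Nonempty {φ₀ : F →g parityGraph G U // ∀ a, (φ₀ a).1.1 = f' a}) :
    (pickLift G U F f h).1 = (pickLift G U F f' h').1 := by
  subst hff; rfl

/-- Let `G` be a connected finite simple graph, `U ⊆ V(G)`, `F` a finite
simple graph, and `ρ : G_U → G` the projection `(v,S) ↦ v`.  For every homomorphism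
`ψ : F → G` the number `hom_ψ(F, G_∅)` of homomorphisms `φ : F → G_∅` with `ρ ∘ φ = ψ`
is positive, and `hom(F, G_U) ≤ hom(F, G_∅)`. -/
theorem parityGraph_hom_counts [Fintype V] {α : Type} [Fintype α]
    (G : SimpleGraph V) (hG : G.Connected) (U : Set V) (F : SimpleGraph α) :
    (∀ ψ : F →g G,
      0 < Nat.card {φ : F →g parityGraph G (∅ : Set V) // ∀ a, (φ a).1.1 = ψ a}) ∧
    Nat.card (F →g parityGraph G U) ≤ Nat.card (F →g parityGraph G (∅ : Set V)) := by
  constructor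
  · intro ψ
    have hne : Nonempty {φ : F →g parityGraph G (∅ : Set V) // ∀ a, (φ a).1.1 = ψ a} := by
      refine ⟨⟨⟨fun a => ⟨(ψ a, (∅ : Set (Sym2 V))), ?_, ?_⟩, ?_⟩, fun a => rfl⟩⟩
      · exact Set.empty_subset _
      · simp
      · intro a b hab
        exact (⟨ψ.map_rel' hab, by simp [Set.mem_symmDiff]⟩ :
          G.Adj (ψ a) (ψ b) ∧ s(ψ a, ψ b) ∉ symmDiff (∅ : Set (Sym2 V)) ∅)
    exact Nat.card_pos
  · refine Nat.card_le_card_of_injective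
      (fun φ => subLift G U F φ
        (pickLift G U F (fun a => (φ a).1.1) ⟨⟨φ, fun _ => rfl⟩⟩).1
        (pickLift G U F (fun a => (φ a).1.1) ⟨⟨φ, fun _ => rfl⟩⟩).2) ?_
    intro φ φ' heq
    have hf : ∀ a, (φ a).1.1 = (φ' a).1.1 := fun a =>
      congrArg (fun χ : F →g parityGraph G (∅ : Set V) => (χ a).1.1) heq
    have hfun : (fun a => (φ a).1.1) = (fun a => (φ' a).1.1) := funext hf
    have hpick : (pickLift G U F (fun a => (φ a).1.1) ⟨⟨φ, fun _ => rfl⟩⟩).1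
        = (pickLift G U F (fun a => (φ' a).1.1) ⟨⟨φ', fun _ => rfl⟩⟩).1 :=
      pickLift_congr G U F _ _ hfun _ _
    apply DFunLike.ext
    intro a
    have hS : symmDiff (φ a).1.2
          ((pickLift G U F (fun a => (φ a).1.1) ⟨⟨φ, fun _ => rfl⟩⟩).1 a).1.2
        = symmDiff (φ' a).1.2
          ((pickLift G U F (fun a => (φ' a).1.1) ⟨⟨φ', fun _ => rfl⟩⟩).1 a).1.2 :=
      congrArg (fun χ : F →g parityGraph G (∅ : Set V) => (χ a).1.2) heq
    rw [← congrArg (fun χ : F →g parityGraph G U => (χ a).1.2) hpick] at hS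
    have hS2 : (φ a).1.2 = (φ' a).1.2 := by
      have := symmDiff_left_injective
        ((pickLift G U F (fun a => (φ a).1.1) ⟨⟨φ, fun _ => rfl⟩⟩).1 a).1.2 hS
      exact this
    exact Subtype.ext (Prod.ext (hf a) hS2)
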